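/- Let g be a compact Lie algebra with Ad-invariant inner product, h a subalgebra, v = h^⊥, x ∈ v. The dimension of the kernel of the form Λ_x(η₁,η₂) = −⟨x,[η₁,η₂]⟩ restricted to j_x = {η ∈ v : ⟨η,[x,h]⟩=0} equals dim g_x − dim h_x. -/

import Mathlib

/-- Compact Lie algebra `g` with `Ad`-invariant inner product `B`,
subalgebra `h`, `v = h^⊥`, `x ∈ v`.  Let `j_x` be the orthogonal complement in `v`
of `[x, h]`, and let `K_x` be the kernel of the skew form
`Λ_x(η₁,η₂) = −B x ⁅η₁,η₂⁆` on `j_x`, i.e.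
`K_x = {η ∈ j_x : B x ⁅η₂, η⁆ = 0 for all η₂ ∈ j_x}`.  Then
`dim K_x = dim g_x − dim h_x`, where `g_x = ker (ad x)` is the centralizer of `x`
and `h_x = h ∩ g_x` (stated additively: `dim K_x + dim h_x = dim g_x`). -/
theorem stmt6 {g : Type*} [LieRing g] [LieAlgebra ℝ g] [FiniteDimensional ℝ g]
    (B : LinearMap.BilinForm ℝ g)
    (hsymm : ∀ x y : g, B x y = B y x)
    (hpos : ∀ x : g, x ≠ 0 → 0 < B x x)
    (hinv : ∀ a x y : g, B ⁅a, x⁆ y + B x ⁅a, y⁆ = 0)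
    (h : LieSubalgebra ℝ g)
    (V : Submodule ℝ g) (hV : V = B.orthogonal h.toSubmodule)
    (x : g) (hx : x ∈ V)
    (Jx : Submodule ℝ g)
    (hJx : Jx = V ⊓ B.orthogonal (Submodule.map (LieAlgebra.ad ℝ g x) h.toSubmodule))
    (Kx : Submodule ℝ g)
    (hKx : Kx = Jx ⊓ (⨅ η₂ ∈ Jx, LinearMap.ker ((B x).comp (LieAlgebra.ad ℝ g η₂))))
    (gx hx_sub : Submodule ℝ g)
    (hgx : gx = LinearMap.ker (LieAlgebra.ad ℝ g x))
    (hhx : hx_sub = h.toSubmodule ⊓ LinearMap.ker (LieAlgebra.ad ℝ g x)) :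
    Module.finrank ℝ Kx + Module.finrank ℝ hx_sub = Module.finrank ℝ gx := by
  classical
  set Q : Submodule ℝ g := h.toSubmodule with hQ
  set A : Submodule ℝ g := Submodule.map (LieAlgebra.ad ℝ g x) Q with hA
  -- basic facts about B
  have hzero : ∀ z : g, B z z = 0 → z = 0 := by
    intro z hz
    by_contra hne
    exact (hpos z hne).ne' hz
  have hrefl : B.IsRefl := fun a b hab => by rw [hsymm]; exact hab
  -- orthogonal complements are complements
  have hcompl : ∀ W : Submodule ℝ g, IsCompl W (B.orthogonal W) := by
    intro W
    refine LinearMap.BilinForm.isCompl_orthogonal_of_restrict_nondegenerate hrefl ?_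
    constructor
    all_goals
      intro ⟨w, hw⟩ hcond
      have := hcond ⟨w, hw⟩
      simp only [LinearMap.BilinForm.restrict_apply, LinearMap.domRestrict_apply] at this
      exact Subtype.ext (hzero w this)
  -- x is orthogonal to Q
  have hxQ : ∀ ζ ∈ Q, B ζ x = 0 := by
    rw [hV] at hx
    intro ζ hζ
    exact (LinearMap.BilinForm.mem_orthogonal_iff.mp hx) ζ hζ
  -- A = [x, h] is orthogonal to Q  (i.e. A ≤ V)
  have hAQ : ∀ ζ ∈ Q, ∀ n ∈ Q, B n ⁅x, ζ⁆ = 0 := by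
    intro ζ hζ n hn
    have h1 := hinv ζ x n
    have h2 : B x ⁅ζ, n⁆ = 0 := by
      rw [hsymm]; exact hxQ _ (h.lie_mem hζ hn)
    have h3 : B ⁅ζ, x⁆ n = 0 := by linarith
    have : B ⁅x, ζ⁆ n = 0 := by
      rw [← lie_skew, map_neg, LinearMap.neg_apply, h3, neg_zero]
    rw [hsymm]; exact this
  have hAV : A ≤ V := by
    rw [hV]
    rintro _ ⟨ζ, hζ, rfl⟩
    rw [LinearMap.BilinForm.mem_orthogonal_iff]
    intro n hn
    exact hAQ ζ hζ n hn
  -- membership in Jx characterization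
  have hV' : ∀ v ∈ V, ∀ n ∈ Q, B n v = 0 := by
    rw [hV]; intro v hv; exact LinearMap.BilinForm.mem_orthogonal_iff.mp hv
  have hJmem : ∀ η, η ∈ Jx ↔ (η ∈ V ∧ ∀ ζ ∈ Q, B ⁅x, ζ⁆ η = 0) := by
    intro η
    rw [hJx, Submodule.mem_inf, LinearMap.BilinForm.mem_orthogonal_iff]
    constructor
    · rintro ⟨h1, h2⟩
      exact ⟨h1, fun ζ hζ => h2 _ ⟨ζ, hζ, by simp [LieAlgebra.ad_apply]⟩⟩
    · rintro ⟨h1, h2⟩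
      exact ⟨h1, by rintro _ ⟨ζ, hζ, rfl⟩; simpa [LieAlgebra.ad_apply] using h2 ζ hζ⟩
  -- membership in Kx characterization
  have hKmem : ∀ η, η ∈ Kx ↔ (η ∈ Jx ∧ ∀ η₂ ∈ Jx, B x ⁅η₂, η⁆ = 0) := by
    intro η
    rw [hKx, Submodule.mem_inf]
    simp only [Submodule.mem_iInf, LinearMap.mem_ker, LinearMap.comp_apply,
      LieAlgebra.ad_apply]
  -- key: any u orthogonal to Q and to Jx lies in A
  have hmemA : ∀ u : g, (∀ ζ ∈ Q, B u ζ = 0) → (∀ w ∈ Jx, B u w = 0) → u ∈ A := by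
    intro u hu1 hu2
    -- decompose u = ξ + v with ξ ∈ Q, v ∈ V
    have huQV : u ∈ Q ⊔ V := by rw [hV, (hcompl Q).sup_eq_top]; trivial
    obtain ⟨ξ, hξ, v, hv, rfl⟩ := Submodule.mem_sup.mp huQV
    -- decompose v = b + w with b ∈ A, w ∈ orthogonal A
    obtain ⟨b, hb, w, hw, rfl⟩ := Submodule.mem_sup.mp
      (by rw [(hcompl A).sup_eq_top]; trivial : (v : g) ∈ A ⊔ B.orthogonal A)
    -- w ∈ Jx
    have hwV : w ∈ V := by
      have : w = (b + w) - b := by abel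
      rw [this]
      exact V.sub_mem hv (hAV hb)
    have hwJ : w ∈ Jx := by
      rw [hJmem]
      refine ⟨hwV, fun ζ hζ => ?_⟩
      exact (LinearMap.BilinForm.mem_orthogonal_iff.mp hw) _
        ⟨ζ, hζ, by simp [LieAlgebra.ad_apply]⟩
    -- show ξ + w = 0, so u = b ∈ A
    have hbξ : B (ξ + w) ξ = 0 := by
      have h1 : B (ξ + (b + w)) ξ = 0 := hu1 ξ hξ
      have h2 : B b ξ = 0 := by rw [hsymm]; exact hV' b (hAV hb) ξ hξ
      have : B (ξ + (b + w)) ξ = B ξ ξ + B b ξ + B w ξ := by simp [map_add]; ring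
      have h4 : B (ξ + w) ξ = B ξ ξ + B w ξ := by simp [map_add]
      linarith
    have hbw : B (ξ + w) w = 0 := by
      have h1 : B (ξ + (b + w)) w = 0 := hu2 w hwJ
      have h2 : B b w = 0 := (LinearMap.BilinForm.mem_orthogonal_iff.mp hw) b hb
      have : B (ξ + (b + w)) w = B ξ w + B b w + B w w := by simp [map_add]; ring
      have h4 : B (ξ + w) w = B ξ w + B w w := by simp [map_add]
      linarith
    have hsum : ξ + w = 0 := by
      apply hzero
      have : B (ξ + w) (ξ + w) = B (ξ + w) ξ + B (ξ + w) w := by simp [map_add]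
      rw [this, hbξ, hbw, add_zero]
    have : ξ + (b + w) = b := by
      have : ξ + (b + w) = b + (ξ + w) := by abel
      rw [this, hsum, add_zero]
    rw [this]; exact hb
  -- Claim: Kx = Jx ⊓ (gx ⊔ Q)
  have hKeq : Kx = Jx ⊓ (gx ⊔ Q) := by
    ext η
    rw [Submodule.mem_inf, hKmem]
    constructor
    · rintro ⟨hηJ, hηK⟩
      refine ⟨hηJ, ?_⟩
      -- u := ⁅x, η⁆ is orthogonal to Q and Jx, hence in A
      have huA : ⁅x, η⁆ ∈ A := by
        apply hmemA
        · intro ζ hζ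
          have h1 := hinv x η ζ
          have h2 : B ⁅x, ζ⁆ η = 0 := ((hJmem η).mp hηJ).2 ζ hζ
          have h3 : B η ⁅x, ζ⁆ = 0 := by rw [hsymm]; exact h2
          linarith
        · intro w hw
          have h1 := hinv x η w
          have h2 : B x ⁅w, η⁆ = 0 := hηK w hw
          have h3 := hinv w x η
          have h4 : B ⁅w, x⁆ η = 0 := by linarith
          have h5 : B ⁅x, w⁆ η = 0 := by
            rw [← lie_skew, map_neg, LinearMap.neg_apply, h4, neg_zero]
          have h6 : B η ⁅x, w⁆ = 0 := by rw [hsymm]; exact h5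
          linarith
      obtain ⟨ζ, hζ, hζ2⟩ := huA
      simp only [LieAlgebra.ad_apply] at hζ2
      have hz : η - ζ ∈ gx := by
        rw [hgx, LinearMap.mem_ker]
        simp [LieAlgebra.ad_apply, lie_sub, hζ2]
      have : η = (η - ζ) + ζ := by abel
      rw [this]
      exact Submodule.add_mem_sup hz hζ
    · rintro ⟨hηJ, hηgQ⟩
      refine ⟨hηJ, ?_⟩
      obtain ⟨z, hz, ξ, hξ, rfl⟩ := Submodule.mem_sup.mp hηgQ
      intro η₂ hη₂
      have hxz : ⁅x, z⁆ = 0 := by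
        rw [hgx, LinearMap.mem_ker] at hz
        simpa [LieAlgebra.ad_apply] using hz
      have h1 : B x ⁅η₂, z⁆ = 0 := by
        have h2 := hinv z x η₂
        have h3 : B ⁅z, x⁆ η₂ = 0 := by
          rw [← lie_skew, hxz, neg_zero, map_zero, LinearMap.zero_apply]
        have h4 : B x ⁅z, η₂⁆ = 0 := by linarith
        rw [← lie_skew, map_neg, h4, neg_zero]
      have h5 : B x ⁅η₂, ξ⁆ = 0 := by
        have h6 := hinv η₂ x ξ
        have h7 : B ⁅x, ξ⁆ η₂ = 0 := ((hJmem η₂).mp hη₂).2 ξ hξ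
        have h8 : B ⁅η₂, x⁆ ξ = 0 := by
          have h9 := hinv x ξ η₂
          have h10 : B ξ ⁅x, η₂⁆ = 0 := by linarith
          have h11 : B ⁅x, η₂⁆ ξ = 0 := by rw [hsymm]; exact h10
          rw [← lie_skew, map_neg, LinearMap.neg_apply, h11, neg_zero]
        linarith
      have : B x ⁅η₂, z + ξ⁆ = B x ⁅η₂, z⁆ + B x ⁅η₂, ξ⁆ := by
        rw [lie_add, map_add]
      rw [this, h1, h5, add_zero]
  -- Jx ∩ Q = ⊥
  have hdisj : Jx ⊓ Q = ⊥ := by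
    rw [eq_bot_iff]
    intro η hη
    obtain ⟨hηJ, hηQ⟩ := Submodule.mem_inf.mp hη
    have : B η η = 0 := hV' η ((hJmem η).mp hηJ).1 η hηQ
    simp [hzero η this]
  -- gx ≤ Jx ⊔ Q
  have hgxle : gx ≤ Jx ⊔ Q := by
    intro z hz
    have hzQV : z ∈ Q ⊔ V := by rw [hV, (hcompl Q).sup_eq_top]; trivial
    obtain ⟨ξ, hξ, v, hv, rfl⟩ := Submodule.mem_sup.mp hzQV
    have hxz : ⁅x, ξ + v⁆ = 0 := by
      rw [hgx, LinearMap.mem_ker] at hz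
      simpa [LieAlgebra.ad_apply] using hz
    have hvJ : v ∈ Jx := by
      rw [hJmem]
      refine ⟨hv, fun ζ hζ => ?_⟩
      have h1 : B ⁅x, ζ⁆ (ξ + v) = 0 := by
        rw [hsymm]
        have h2 := hinv x (ξ + v) ζ
        rw [hxz, map_zero, LinearMap.zero_apply] at h2
        linarith
      have h2 : B ⁅x, ζ⁆ ξ = 0 := by
        rw [hsymm]
        exact hV' _ (hAV ⟨ζ, hζ, by simp [LieAlgebra.ad_apply]⟩) ξ hξ
      have h3 : B ⁅x, ζ⁆ (ξ + v) = B ⁅x, ζ⁆ ξ + B ⁅x, ζ⁆ v := by simp [map_add]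
      linarith
    have : ξ + v = v + ξ := by abel
    rw [this]
    exact Submodule.add_mem_sup hvJ hξ
  -- finrank computation
  have hmod : Kx ⊔ Q = gx ⊔ Q := by
    have h1 : (gx ⊔ Q) ⊓ Jx ⊔ Q = (gx ⊔ Q) ⊓ (Jx ⊔ Q) :=
      inf_sup_assoc_of_le Jx (le_sup_right : Q ≤ gx ⊔ Q)
    have h2 : gx ⊔ Q ≤ Jx ⊔ Q := sup_le hgxle le_sup_right
    rw [hKeq, inf_comm, h1, inf_eq_left.mpr h2]
  have hKQ : Kx ⊓ Q = ⊥ := by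
    rw [eq_bot_iff, ← hdisj]
    exact inf_le_inf_right Q (by rw [hKeq]; exact inf_le_left)
  have hgxQ : gx ⊓ Q = hx_sub := by
    rw [hhx, hgx, inf_comm]
  have e1 := Submodule.finrank_sup_add_finrank_inf_eq Kx Q
  have e2 := Submodule.finrank_sup_add_finrank_inf_eq gx Q
  rw [hmod, hKQ] at e1
  rw [hgxQ] at e2
  have hbot : Module.finrank ℝ (⊥ : Submodule ℝ g) = 0 := finrank_bot ℝ g
  omega
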